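/- Let n ≥ 2, let K = {0,…,n−1}^ω with the product measure λ giving each coordinate the uniform distribution, let F ⊆ K be a closed set with λ(F) > 0. Then there exist x ∈ F and k₁ ∈ ω such that for all k ≥ k₁ and all i < n, the basic clopen set [x|k ⌢ i] (sequences extending x restricted to k followed by the digit i) meets F. -/

import Mathlib

open MeasureTheory

namespace Stmt10Aux

variable {n : ℕ}

/-- The basic cylinder determined by a finite string `σ`. -/
def cyl {k : ℕ} (σ : Fin k → Fin n) : Set (ℕ → Fin n) :=
  {y | ∀ j : Fin k, y j = σ j}

/-- Extend a string of length `k` by one digit `i`. -/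
def ext' {k : ℕ} (σ : Fin k → Fin n) (i : Fin n) : Fin (k + 1) → Fin n :=
  fun j => if h : (j : ℕ) < k then σ ⟨j, h⟩ else i

lemma measurable_cyl {k : ℕ} (σ : Fin k → Fin n) : MeasurableSet (cyl σ) := by
  have : cyl σ = ⋂ j : Fin k, (fun y : ℕ → Fin n => y (j : ℕ)) ⁻¹' {σ j} := by
    ext y; simp [cyl]
  rw [this]
  exact MeasurableSet.iInter fun j =>
    (measurable_pi_apply _) (measurableSet_singleton _)

lemma cyl_ext_eq (x : ℕ → Fin n) (k : ℕ) (i : Fin n) :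
    cyl (ext' (fun j : Fin k => x j) i) =
      {y : ℕ → Fin n | (∀ j < k, y j = x j) ∧ y k = i} := by
  ext y
  simp only [cyl, ext', Set.mem_setOf_eq]
  constructor
  · intro h
    refine ⟨fun j hj => ?_, ?_⟩
    · have := h ⟨j, Nat.lt_succ_of_lt hj⟩
      simpa [hj] using this
    · have := h ⟨k, Nat.lt_succ_self k⟩
      simpa using this
  · rintro ⟨h1, h2⟩ j
    by_cases hj : (j : ℕ) < k
    · simp [hj, h1 j hj]
    · have hk : (j : ℕ) = k := Nat.eq_of_lt_succ_of_not_lt j.isLt hj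
      simp [hj, hk, h2]

lemma mem_cyl_self (x : ℕ → Fin n) (k : ℕ) : x ∈ cyl (fun j : Fin k => x j) :=
  fun _ => rfl

lemma cyl_ext_subset {k : ℕ} (σ : Fin k → Fin n) (i : Fin n) :
    cyl (ext' σ i) ⊆ cyl σ := by
  intro y hy j
  have := hy ⟨(j : ℕ), Nat.lt_succ_of_lt j.isLt⟩
  simpa [ext', j.isLt] using this

lemma ext'_injective_left {k : ℕ} {σ τ : Fin k → Fin n} {i i' : Fin n}
    (h : ext' σ i = ext' τ i') : σ = τ := by
  funext j
  have := congrFun h ⟨(j : ℕ), Nat.lt_succ_of_lt j.isLt⟩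
  simpa [ext', j.isLt] using this

lemma cyl_disjoint {k : ℕ} {σ τ : Fin k → Fin n} (h : σ ≠ τ) :
    Disjoint (cyl σ) (cyl τ) := by
  rw [Set.disjoint_left]
  intro y hy hy'
  exact h (funext fun j => (hy j).symm.trans (hy' j))

lemma cyl_subset_of_inter {l m : ℕ} (hml : m ≤ l) {τ : Fin l → Fin n}
    {ρ : Fin m → Fin n} (h : (cyl τ ∩ cyl ρ).Nonempty) : cyl τ ⊆ cyl ρ := by
  obtain ⟨y, hy1, hy2⟩ := h
  intro z hz j
  have hj : (j : ℕ) < l := lt_of_lt_of_le j.isLt hml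
  calc z j = τ ⟨j, hj⟩ := hz ⟨j, hj⟩
    _ = y j := (hy1 ⟨j, hj⟩).symm
    _ = ρ j := hy2 j

end Stmt10Aux

open Stmt10Aux

/-- Let `K = {0,…,n−1}^ω` carry the uniform product measure `λ` (characterized
by `λ([σ]) = n^{-k}` for cylinders of length `k`), and let `F ⊆ K` be closed with
`λ(F) > 0`. Then there are `x ∈ F` and `k₁` such that for all `k ≥ k₁` and all `i < n` the
basic clopen set `[x|k ⌢ i]` meets `F`. -/
theorem stmt10 (n : ℕ) (hn : 2 ≤ n)
    (μ : Measure (ℕ → Fin n))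
    (hcyl : ∀ (k : ℕ) (σ : Fin k → Fin n),
      μ {y | ∀ j : Fin k, y j = σ j} = (1 / (n : ENNReal)) ^ k)
    (F : Set (ℕ → Fin n)) (hF : IsClosed F) (hpos : 0 < μ F) :
    ∃ x ∈ F, ∃ k₁ : ℕ, ∀ k ≥ k₁, ∀ i : Fin n,
      ({y : ℕ → Fin n | (∀ j < k, y j = x j) ∧ y k = i} ∩ F).Nonempty := by
  classical
  have hn0 : (n : ENNReal) ≠ 0 := by
    exact Nat.cast_ne_zero.mpr (by omega)
  have hnt : (n : ENNReal) ≠ ⊤ := ENNReal.natCast_ne_top n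
  have hμcyl : ∀ (k : ℕ) (σ : Fin k → Fin n),
      μ (cyl σ) = (1 / (n : ENNReal)) ^ k := fun k σ => hcyl k σ
  -- the set of points that are "bad at level k"
  set B : ℕ → Set (ℕ → Fin n) := fun k =>
    {x | ∃ i : Fin n, {y : ℕ → Fin n | (∀ j < k, y j = x j) ∧ y k = i} ∩ F = ∅}
    with hBdef
  -- bad strings at level k: alive (cylinder meets F) with a dead child
  set bad : ∀ k : ℕ, Finset (Fin k → Fin n) := fun k =>
    Finset.univ.filter fun σ =>
      ((cyl σ ∩ F).Nonempty ∧ ∃ i : Fin n, cyl (ext' σ i) ∩ F = ∅) with hbaddef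
  -- a choice of dead child for each string
  set dc : ∀ k : ℕ, (Fin k → Fin n) → Fin n := fun k σ =>
    if h : ∃ i : Fin n, cyl (ext' σ i) ∩ F = ∅ then h.choose else ⟨0, by omega⟩
    with hdcdef
  have hdc : ∀ (k : ℕ) (σ : Fin k → Fin n), σ ∈ bad k →
      cyl (ext' σ (dc k σ)) ∩ F = ∅ := by
    intro k σ hσ
    rw [hbaddef] at hσ
    simp only [Finset.mem_filter, Finset.mem_univ, true_and] at hσ
    rw [hdcdef]
    simp only [hσ.2, dif_pos]
    exact hσ.2.choose_spec
  -- the (disjoint) dead children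
  set D : ℕ → Set (ℕ → Fin n) := fun k =>
    ⋃ σ ∈ bad k, cyl (ext' σ (dc k σ)) with hDdef
  have hDmeas : ∀ k, MeasurableSet (D k) := fun k =>
    (bad k).measurableSet_biUnion fun σ _ => measurable_cyl _
  -- measure of D k
  have hDmeasure : ∀ k, μ (D k) = (bad k).card * (1 / (n : ENNReal)) ^ (k + 1) := by
    intro k
    rw [hDdef]
    rw [measure_biUnion_finset ?_ fun σ _ => measurable_cyl _]
    · simp [hμcyl]
    · intro σ _ τ _ hστ
      exact cyl_disjoint fun h => hστ (ext'_injective_left h)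
  -- F ∩ B k is covered by the bad cylinders
  have hcover : ∀ k, F ∩ B k ⊆ ⋃ σ ∈ bad k, cyl σ := by
    intro k x ⟨hxF, hxB⟩
    obtain ⟨i, hi⟩ := hxB
    have hmem : (fun j : Fin k => x j) ∈ bad k := by
      rw [hbaddef]
      refine Finset.mem_filter.mpr ⟨Finset.mem_univ _, ⟨x, mem_cyl_self x k, hxF⟩, i, ?_⟩
      rw [cyl_ext_eq]; exact hi
    exact Set.mem_biUnion hmem (mem_cyl_self x k)
  -- key estimate
  have hkey : ∀ k, μ (F ∩ B k) ≤ (n : ENNReal) * μ (D k) := by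
    intro k
    calc μ (F ∩ B k) ≤ μ (⋃ σ ∈ bad k, cyl σ) := measure_mono (hcover k)
      _ ≤ ∑ σ ∈ bad k, μ (cyl σ) := measure_biUnion_finset_le _ _
      _ = (bad k).card * (1 / (n : ENNReal)) ^ k := by simp [hμcyl]
      _ = (n : ENNReal) * ((bad k).card * (1 / (n : ENNReal)) ^ (k + 1)) := by
          rw [pow_succ]
          rw [one_div]
          rw [mul_comm ((n : ENNReal)) _, mul_assoc, mul_assoc,
            ENNReal.inv_mul_cancel hn0 hnt, mul_one]
      _ = (n : ENNReal) * μ (D k) := by rw [hDmeasure k]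
  -- the sets D k are pairwise disjoint
  have hDdisj : Pairwise (Function.onFun Disjoint D) := by
    have key : ∀ k l, k < l → Disjoint (D k) (D l) := by
      intro k l hkl
      rw [Set.disjoint_left]
      intro y hyk hyl
      rw [hDdef] at hyk hyl
      simp only [Set.mem_iUnion] at hyk hyl
      obtain ⟨σ, hσ, hyσ⟩ := hyk
      obtain ⟨τ, hτ, hyτ⟩ := hyl
      -- cyl τ ⊆ cyl (ext' σ (dc k σ)), but τ is alive and the latter misses F
      have h1 : y ∈ cyl τ := cyl_ext_subset τ (dc l τ) hyτ
      have h2 : cyl τ ⊆ cyl (ext' σ (dc k σ)) :=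
        cyl_subset_of_inter (Nat.succ_le_of_lt hkl) ⟨y, h1, hyσ⟩
      have halive : (cyl τ ∩ F).Nonempty := by
        rw [hbaddef] at hτ
        simp only [Finset.mem_filter, Finset.mem_univ, true_and] at hτ
        exact hτ.1
      obtain ⟨z, hz1, hz2⟩ := halive
      have : z ∈ cyl (ext' σ (dc k σ)) ∩ F := ⟨h2 hz1, hz2⟩
      rw [hdc k σ hσ] at this
      exact this
    intro k l hkl
    rcases lt_or_gt_of_ne hkl with h | h
    · exact key k l h
    · exact (key l k h).symm
  -- total measure of the D k is at most 1
  have huniv : μ Set.univ = 1 := by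
    have := hcyl 0 (fun j => j.elim0)
    simpa using this
  have hDsum : ∑' k, μ (D k) ≤ 1 := by
    rw [← measure_iUnion hDdisj hDmeas]
    rw [← huniv]
    exact measure_mono (Set.subset_univ _)
  -- Borel–Cantelli
  have hsum : ∑' k, μ (F ∩ B k) ≠ ⊤ := by
    have : ∑' k, μ (F ∩ B k) ≤ (n : ENNReal) * 1 := by
      calc ∑' k, μ (F ∩ B k) ≤ ∑' k, (n : ENNReal) * μ (D k) :=
            ENNReal.tsum_le_tsum hkey
        _ = (n : ENNReal) * ∑' k, μ (D k) := ENNReal.tsum_mul_left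
        _ ≤ (n : ENNReal) * 1 := by gcongr
    exact ne_top_of_le_ne_top (by simpa using hnt) this
  have hlimsup : μ (Filter.limsup (fun k => F ∩ B k) Filter.atTop) = 0 :=
    measure_limsup_atTop_eq_zero hsum
  -- find a point of F outside the limsup
  have hFsub : 0 < μ (F \ Filter.limsup (fun k => F ∩ B k) Filter.atTop) := by
    by_contra h
    push_neg at h
    have h0 : μ (F \ Filter.limsup (fun k => F ∩ B k) Filter.atTop) = 0 :=
      le_antisymm h zero_le
    have : μ F ≤ μ (F \ Filter.limsup (fun k => F ∩ B k) Filter.atTop)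
        + μ (Filter.limsup (fun k => F ∩ B k) Filter.atTop) := by
      refine (measure_mono ?_).trans (measure_union_le _ _)
      intro x hx
      by_cases hx' : x ∈ Filter.limsup (fun k => F ∩ B k) Filter.atTop
      · exact Or.inr hx'
      · exact Or.inl ⟨hx, hx'⟩
    rw [h0, hlimsup] at this
    simpa using lt_of_lt_of_le hpos this
  obtain ⟨x, hxF, hxL⟩ := nonempty_of_measure_ne_zero hFsub.ne'
  -- unfold limsup membership
  have hlim : Filter.limsup (fun k => F ∩ B k) Filter.atTop
      = ⋂ m : ℕ, ⋃ k, ⋃ (_ : k ≥ m), F ∩ B k := Filter.limsup_eq_iInf_iSup_of_nat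
  rw [hlim] at hxL
  simp only [Set.mem_iInter, Set.mem_iUnion, not_forall, not_exists] at hxL
  obtain ⟨k₁, hk₁⟩ := hxL
  refine ⟨x, hxF, k₁, fun k hk i => ?_⟩
  have hxB : x ∉ B k := fun h => hk₁ k hk ⟨hxF, h⟩
  rw [hBdef] at hxB
  simp only [Set.mem_setOf_eq, not_exists] at hxB
  exact Set.nonempty_iff_ne_empty.2 (hxB i)
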